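/- Fix an integer n ≥ 3 and real parameters l, l̃ each satisfying the admissibility condition 2·sin(π/(2n)) < l < 2·sin(π/n). If γ : [0,1] → ℝ² is a continuous map such that for every t ∈ [0,1] the pair γ(t) is a positive solution of the n-gonal Siamese system with parameters (l, l̃), then γ is constant. (In other words, no Siamese dipyramid is flexible: there is no nonconstant continuous deformation preserving the lengths of edges.) -/

import Mathlib

set_option maxHeartbeats 1000000


/-- `(x, x̃) = p` is a positive solution of the `n`-gonal Siamese system with
parameters `(l, l̃)`. -/
def SiamesePosSol (n : ℕ) (l lt : ℝ) (p : ℝ × ℝ) : Prop :=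
  0 < p.1 ∧ p.1 < 1 ∧ 0 < p.2 ∧ p.2 < 1 ∧
  l ≤ 2 * Real.sqrt (1 - p.1 ^ 2) ∧ lt ≤ 2 * Real.sqrt (1 - p.2 ^ 2) ∧
  p.2 = Real.sqrt (1 - p.1 ^ 2) *
      Real.sin (n * Real.arcsin (l / (2 * Real.sqrt (1 - p.1 ^ 2)))) ∧
  p.1 = Real.sqrt (1 - p.2 ^ 2) *
      Real.sin (n * Real.arcsin (lt / (2 * Real.sqrt (1 - p.2 ^ 2))))

/-! ### Auxiliary Chebyshev-style machinery -/

/-- Chebyshev polynomials of the first kind, as plain functions. -/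
noncomputable def sdCheb : ℕ → ℝ → ℝ
  | 0 => fun _ => 1
  | 1 => fun x => x
  | (k+2) => fun x => 2 * x * sdCheb (k+1) x - sdCheb k x

lemma sdCheb_cos : ∀ (k : ℕ) (ψ : ℝ), sdCheb k (Real.cos ψ) = Real.cos (k * ψ) := by
  intro k
  induction k using Nat.twoStepInduction with
  | zero => intro ψ; simp [sdCheb]
  | one => intro ψ; simp [sdCheb]
  | more k ih1 ih2 =>
      intro ψ
      show 2 * Real.cos ψ * sdCheb (k+1) (Real.cos ψ) - sdCheb k (Real.cos ψ)
          = Real.cos ((k+2 : ℕ) * ψ)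
      rw [ih1, ih2]
      have h1 : ((k+2 : ℕ) : ℝ) * ψ = ((k+1 : ℕ) : ℝ) * ψ + ψ := by push_cast; ring
      have h2 : ((k : ℕ) : ℝ) * ψ = ((k+1 : ℕ) : ℝ) * ψ - ψ := by push_cast; ring
      rw [h1, h2, Real.cos_add, Real.cos_sub]
      ring

lemma sdCheb_analyticAt : ∀ (k : ℕ) (x : ℝ), AnalyticAt ℝ (sdCheb k) x := by
  intro k
  induction k using Nat.twoStepInduction with
  | zero => intro x; exact analyticAt_const
  | one => intro x; exact analyticAt_id
  | more k ih1 ih2 =>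
      intro x
      show AnalyticAt ℝ (fun x => 2 * x * sdCheb (k+1) x - sdCheb k x) x
      exact (((analyticAt_const.mul analyticAt_id).mul (ih2 x)).sub (ih1 x))

/-- `(1-t)^k * sdCheb k (1 - c/(1-t))`, written as an everywhere-defined
(polynomial) function via the Chebyshev recurrence. -/
noncomputable def sdG (c : ℝ) : ℕ → ℝ → ℝ
  | 0 => fun _ => 1
  | 1 => fun t => 1 - t - c
  | (k+2) => fun t => 2 * (1 - t - c) * sdG c (k+1) t - (1-t)^2 * sdG c k t

lemma sdG_eq (c : ℝ) : ∀ (k : ℕ) (t : ℝ), t ≠ 1 →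
    sdG c k t = (1-t)^k * sdCheb k (1 - c/(1-t)) := by
  intro k
  induction k using Nat.twoStepInduction with
  | zero => intro t _; simp [sdG, sdCheb]
  | one =>
      intro t ht
      have h1 : (1:ℝ) - t ≠ 0 := sub_ne_zero.mpr (Ne.symm ht)
      show 1 - t - c = (1-t)^1 * (1 - c/(1-t))
      field_simp
  | more k ih1 ih2 =>
      intro t ht
      have h1 : (1:ℝ) - t ≠ 0 := sub_ne_zero.mpr (Ne.symm ht)
      show 2 * (1 - t - c) * sdG c (k+1) t - (1-t)^2 * sdG c k t
          = (1-t)^(k+2) * sdCheb (k+2) (1 - c/(1-t))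
      rw [ih1 t ht, ih2 t ht]
      show _ = (1-t)^(k+2) *
        (2 * (1 - c/(1-t)) * sdCheb (k+1) (1 - c/(1-t)) - sdCheb k (1 - c/(1-t)))
      have key : 1 - t - c = (1-t) * (1 - c/(1-t)) := by field_simp
      rw [key]
      ring

lemma sdG_analyticAt (c : ℝ) : ∀ (k : ℕ) (x : ℝ), AnalyticAt ℝ (sdG c k) x := by
  intro k
  induction k using Nat.twoStepInduction with
  | zero => intro x; exact analyticAt_const
  | one =>
      intro x
      show AnalyticAt ℝ (fun t => 1 - t - c) x
      exact (analyticAt_const.sub analyticAt_id).sub analyticAt_const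
  | more k ih1 ih2 =>
      intro x
      show AnalyticAt ℝ
        (fun t => 2 * (1 - t - c) * sdG c (k+1) t - (1-t)^2 * sdG c k t) x
      exact ((analyticAt_const.mul
        ((analyticAt_const.sub analyticAt_id).sub analyticAt_const)).mul (ih2 x)).sub
        (((analyticAt_const.sub analyticAt_id).pow 2).mul (ih1 x))

/-- The rational function `s ↦ (1-s)·(1 - T_n(1 - (l²/2)/(1-s)))/2`;
for `s = x²` this equals `(1-x²)·sin²(n·arcsin(l/(2√(1-x²))))`. -/
noncomputable def sdM (n : ℕ) (l : ℝ) (s : ℝ) : ℝ :=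
  (1 - s) * (1 - sdCheb n (1 - (l^2/2)/(1-s))) / 2

/-- Entire version of `(1-t)^n · (1-t)·(1 - T_n(1 - (lt²/2)/(1-t)))/2`. -/
noncomputable def sdN (n : ℕ) (lt : ℝ) (t : ℝ) : ℝ :=
  ((1-t)^(n+1) - (1-t) * sdG (lt^2/2) n t) / 2

noncomputable def sdH (n : ℕ) (l lt : ℝ) (s : ℝ) : ℝ :=
  sdN n lt (sdM n l s) - s * (1 - sdM n l s)^n

lemma sdM_analyticAt (n : ℕ) (l : ℝ) {s : ℝ} (hs : s < 1) :
    AnalyticAt ℝ (sdM n l) s := by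
  have h1 : (1:ℝ) - s ≠ 0 := sub_ne_zero.mpr (ne_of_gt (by linarith))
  have hinner : AnalyticAt ℝ (fun s : ℝ => 1 - (l^2/2)/(1-s)) s :=
    analyticAt_const.sub (analyticAt_const.div (analyticAt_const.sub analyticAt_id) h1)
  have hcheb : AnalyticAt ℝ (fun s : ℝ => sdCheb n (1 - (l^2/2)/(1-s))) s :=
    (sdCheb_analyticAt n _).comp hinner
  exact (((analyticAt_const.sub analyticAt_id).mul
    (analyticAt_const.sub hcheb)).div analyticAt_const two_ne_zero)

lemma sdN_analyticAt (n : ℕ) (lt : ℝ) (t : ℝ) : AnalyticAt ℝ (sdN n lt) t := by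
  exact (((analyticAt_const.sub analyticAt_id).pow (n+1)).sub
    ((analyticAt_const.sub analyticAt_id).mul (sdG_analyticAt _ n t))).div
    analyticAt_const two_ne_zero

lemma sdH_analyticAt (n : ℕ) (l lt : ℝ) {s : ℝ} (hs : s < 1) :
    AnalyticAt ℝ (sdH n l lt) s := by
  have hM := sdM_analyticAt n l hs
  exact (((sdN_analyticAt n lt _).comp hM).sub
    (analyticAt_id.mul ((analyticAt_const.sub hM).pow n)))

/-- Value of `sdM` at `x²` for admissible `x`. -/
lemma sdM_val (n : ℕ) (l x : ℝ) (hx0 : 0 < x) (hx1 : x < 1) (hl0 : 0 ≤ l)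
    (hl : l ≤ 2 * Real.sqrt (1 - x^2)) :
    sdM n l (x^2) =
      (Real.sqrt (1 - x^2) *
        Real.sin (n * Real.arcsin (l / (2 * Real.sqrt (1 - x^2)))))^2 := by
  have hx2 : (0:ℝ) < 1 - x^2 := by nlinarith
  set c := Real.sqrt (1 - x^2) with hc
  have hcpos : 0 < c := Real.sqrt_pos.mpr hx2
  have hcsq : c^2 = 1 - x^2 := Real.sq_sqrt hx2.le
  set u := l / (2*c) with hu
  have hu0 : 0 ≤ u := div_nonneg hl0 (by linarith)
  have hu1 : u ≤ 1 := by
    rw [hu, div_le_one (by linarith)]; exact hl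
  have hsin : Real.sin (Real.arcsin u) = u := Real.sin_arcsin (by linarith) hu1
  have harg : 1 - (l^2/2)/(1-x^2) = Real.cos (2 * Real.arcsin u) := by
    have hcos2 : Real.cos (2 * Real.arcsin u) = 1 - 2 * Real.sin (Real.arcsin u)^2 := by
      have := Real.sin_sq_eq_half_sub (Real.arcsin u)
      linarith
    rw [hcos2, hsin, hu]
    have h4 : (2*c)^2 = 4 * (1 - x^2) := by rw [mul_pow]; rw [hcsq]; ring
    rw [div_pow, h4]
    field_simp
    ring
  rw [sdM, harg, sdCheb_cos]
  have hangle : (n:ℝ) * (2 * Real.arcsin u) = 2 * ((n:ℝ) * Real.arcsin u) := by ring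
  rw [hangle]
  have hsq := Real.sin_sq_eq_half_sub ((n:ℝ) * Real.arcsin u)
  rw [mul_pow, hcsq, hsq]
  ring

/-- Value of `sdN` at `y²` for admissible `y`. -/
lemma sdN_val (n : ℕ) (lt y : ℝ) (hy0 : 0 < y) (hy1 : y < 1) (hlt0 : 0 ≤ lt)
    (hlt : lt ≤ 2 * Real.sqrt (1 - y^2)) :
    sdN n lt (y^2) = (1 - y^2)^n *
      (Real.sqrt (1 - y^2) *
        Real.sin (n * Real.arcsin (lt / (2 * Real.sqrt (1 - y^2)))))^2 := by
  have hy2 : (0:ℝ) < 1 - y^2 := by nlinarith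
  have hne : (y^2 : ℝ) ≠ 1 := by intro h; rw [h] at hy2; simp at hy2
  rw [sdN, sdG_eq _ n _ hne]
  have h1 : (1 - y^2)^(n+1) - (1-y^2) * ((1-y^2)^n *
      sdCheb n (1 - (lt^2/2)/(1-y^2))) =
      (1-y^2)^n * ((1-y^2) * (1 - sdCheb n (1 - (lt^2/2)/(1-y^2)))) := by ring
  rw [h1]
  -- now same computation as sdM_val
  set c := Real.sqrt (1 - y^2) with hc
  have hcpos : 0 < c := Real.sqrt_pos.mpr hy2
  have hcsq : c^2 = 1 - y^2 := Real.sq_sqrt hy2.le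
  set u := lt / (2*c) with hu
  have hu0 : 0 ≤ u := div_nonneg hlt0 (by linarith)
  have hu1 : u ≤ 1 := by rw [hu, div_le_one (by linarith)]; exact hlt
  have hsin : Real.sin (Real.arcsin u) = u := Real.sin_arcsin (by linarith) hu1
  have harg : 1 - (lt^2/2)/(1-y^2) = Real.cos (2 * Real.arcsin u) := by
    have hcos2 : Real.cos (2 * Real.arcsin u) = 1 - 2 * Real.sin (Real.arcsin u)^2 := by
      have := Real.sin_sq_eq_half_sub (Real.arcsin u)
      linarith
    rw [hcos2, hsin, hu]
    have h4 : (2*c)^2 = 4 * (1 - y^2) := by rw [mul_pow]; rw [hcsq]; ring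
    rw [div_pow, h4]
    field_simp
    ring
  rw [harg, sdCheb_cos]
  have hangle : (n:ℝ) * (2 * Real.arcsin u) = 2 * ((n:ℝ) * Real.arcsin u) := by ring
  rw [hangle]
  have hsq := Real.sin_sq_eq_half_sub ((n:ℝ) * Real.arcsin u)
  rw [mul_pow, hcsq, hsq]
  ring

/-- At a positive solution, `sdH` vanishes at `x²`. -/
lemma sdH_zero (n : ℕ) (l lt : ℝ) (hl0 : 0 ≤ l) (hlt0 : 0 ≤ lt) (p : ℝ × ℝ)
    (hp : SiamesePosSol n l lt p) : sdH n l lt (p.1^2) = 0 := by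
  obtain ⟨hx0, hx1, hy0, hy1, hlx, hlty, heqy, heqx⟩ := hp
  have hM : sdM n l (p.1^2) = p.2^2 := by
    rw [sdM_val n l p.1 hx0 hx1 hl0 hlx, ← heqy]
  have hN : sdN n lt (p.2^2) = (1 - p.2^2)^n * p.1^2 := by
    rw [sdN_val n lt p.2 hy0 hy1 hlt0 hlty, ← heqx]
  rw [sdH, hM, hN]
  ring

lemma pi_div_pos_lt (n : ℕ) (hn : 3 ≤ n) : 0 < Real.pi / n ∧ Real.pi / n ≤ Real.pi / 3 := by
  have hn0 : (0:ℝ) < n := by positivity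
  constructor
  · positivity
  · apply div_le_div_of_nonneg_left Real.pi_pos.le (by norm_num)
    exact_mod_cast hn

lemma l_pos (n : ℕ) (hn : 3 ≤ n) {l : ℝ}
    (hl₁ : 2 * Real.sin (Real.pi / (2 * n)) < l) : 0 < l := by
  have hn0 : (0:ℝ) < n := by exact_mod_cast Nat.lt_of_lt_of_le (by norm_num) hn
  have h1 : 0 < Real.pi / (2 * n) := by positivity
  have hn3 : (3:ℝ) ≤ n := by exact_mod_cast hn
  have h2 : Real.pi / (2 * n) < Real.pi := by
    rw [div_lt_iff₀ (by positivity)]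
    nlinarith [Real.pi_pos]
  have := Real.sin_pos_of_pos_of_lt_pi h1 h2
  linarith

lemma l_lt_two (n : ℕ) (hn : 3 ≤ n) {l : ℝ}
    (hl₂ : l < 2 * Real.sin (Real.pi / n)) : l < 2 := by
  have := Real.sin_le_one (Real.pi / n)
  linarith

/-- No Siamese dipyramid is flexible: any continuous deformation through
positive solutions of the Siamese system is constant. -/
theorem siamese_dipyramid_not_flexible (n : ℕ) (hn : 3 ≤ n) (l lt : ℝ)
    (hl₁ : 2 * Real.sin (Real.pi / (2 * n)) < l) (hl₂ : l < 2 * Real.sin (Real.pi / n))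
    (hlt₁ : 2 * Real.sin (Real.pi / (2 * n)) < lt) (hlt₂ : lt < 2 * Real.sin (Real.pi / n))
    (γ : ℝ → ℝ × ℝ) (hγ : ContinuousOn γ (Set.Icc 0 1))
    (hsol : ∀ t ∈ Set.Icc (0:ℝ) 1, SiamesePosSol n l lt (γ t)) :
    ∀ s ∈ Set.Icc (0:ℝ) 1, ∀ t ∈ Set.Icc (0:ℝ) 1, γ s = γ t := by
  have hl0 : 0 < l := l_pos n hn hl₁
  have hlt0 : 0 < lt := l_pos n hn hlt₁
  have hn0 : (0:ℝ) < n := by exact_mod_cast Nat.lt_of_lt_of_le (by norm_num) hn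
  by_contra hcon
  push_neg at hcon
  obtain ⟨s₀, hs₀, t₀, ht₀, hne⟩ := hcon
  -- first coordinates differ
  have hxne : (γ s₀).1 ≠ (γ t₀).1 := by
    intro hx
    obtain ⟨_, _, _, _, _, _, heqy₀, _⟩ := hsol s₀ hs₀
    obtain ⟨_, _, _, _, _, _, heqy₁, _⟩ := hsol t₀ ht₀
    apply hne
    apply Prod.ext hx
    rw [heqy₀, heqy₁, hx]
  set xf : ℝ → ℝ := fun t => (γ t).1 with hxf
  have hxfc : ContinuousOn xf (Set.Icc 0 1) := continuous_fst.comp_continuousOn hγ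
  have hsub : Set.uIcc s₀ t₀ ⊆ Set.Icc 0 1 := Set.uIcc_subset_Icc hs₀ ht₀
  have hIVT := intermediate_value_uIcc (hxfc.mono hsub)
  set a : ℝ := min (xf s₀) (xf t₀) with ha
  set b : ℝ := max (xf s₀) (xf t₀) with hb
  have hab : a < b := min_lt_max.mpr hxne
  have ha0 : 0 < a := by
    rw [ha, lt_min_iff]
    exact ⟨(hsol s₀ hs₀).1, (hsol t₀ ht₀).1⟩
  have hb1 : b < 1 := by
    rw [hb, max_lt_iff]
    exact ⟨(hsol s₀ hs₀).2.1, (hsol t₀ ht₀).2.1⟩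
  -- every ξ ∈ [a,b] is attained, hence sdH vanishes at ξ²
  have hvan : ∀ ξ ∈ Set.Icc a b, sdH n l lt (ξ^2) = 0 := by
    intro ξ hξ
    have hξ' : ξ ∈ Set.uIcc (xf s₀) (xf t₀) := by
      rw [Set.uIcc]; exact hξ
    obtain ⟨τ, hτmem, hτ⟩ := hIVT hξ'
    rw [← hτ]
    exact sdH_zero n l lt hl0.le hlt0.le (γ τ) (hsol τ (hsub hτmem))
  -- sdH vanishes on the open interval (a², b²)
  have hvano : Set.EqOn (sdH n l lt) 0 (Set.Ioo (a^2) (b^2)) := by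
    intro σ hσ
    obtain ⟨hσ1, hσ2⟩ := hσ
    have hσ0 : 0 ≤ σ := le_trans (by positivity) hσ1.le
    have h1 : a ≤ Real.sqrt σ := by
      rw [show a = Real.sqrt (a^2) from (Real.sqrt_sq ha0.le).symm]
      exact Real.sqrt_le_sqrt hσ1.le
    have h2 : Real.sqrt σ ≤ b := by
      rw [show b = Real.sqrt (b^2) from (Real.sqrt_sq (ha0.trans hab).le).symm]
      exact Real.sqrt_le_sqrt hσ2.le
    have := hvan (Real.sqrt σ) ⟨h1, h2⟩
    rw [Real.sq_sqrt hσ0] at this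
    exact this
  -- identity theorem on (-∞, 1)
  have hana : AnalyticOnNhd ℝ (sdH n l lt) (Set.Iio 1) := fun s hs =>
    sdH_analyticAt n l lt hs
  have hab2 : a^2 < b^2 := by nlinarith
  have hz₀mem : (a^2 + b^2)/2 ∈ Set.Iio (1:ℝ) := by
    simp only [Set.mem_Iio]
    nlinarith
  have hev : sdH n l lt =ᶠ[nhds ((a^2 + b^2)/2)] 0 := by
    apply Filter.eventuallyEq_of_mem (Ioo_mem_nhds (by nlinarith) (by nlinarith)) hvano
  have hEq : Set.EqOn (sdH n l lt) 0 (Set.Iio 1) :=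
    hana.eqOn_zero_of_preconnected_of_eventuallyEq_zero
      (convex_Iio (1:ℝ)).isPreconnected hz₀mem hev
  -- now evaluate at special points to get a contradiction
  rcases eq_or_lt_of_le hn with hn3 | hn4
  · -- n = 3
    have hn3' : n = 3 := hn3.symm
    subst hn3'
    have hlsq : l^2 < 4 := by
      have := l_lt_two 3 (by norm_num) hl₂
      nlinarith
    set s₁ : ℝ := 1 - l^2/2 with hs₁
    set s₂ : ℝ := 1 - l^2/4 with hs₂
    have hs₁m : s₁ ∈ Set.Iio (1:ℝ) := by simp only [Set.mem_Iio, hs₁]; nlinarith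
    have hs₂m : s₂ ∈ Set.Iio (1:ℝ) := by simp only [Set.mem_Iio, hs₂]; nlinarith
    have hM₁ : sdM 3 l s₁ = l^2/4 := by
      rw [sdM]
      have h1 : 1 - (l^2/2)/(1-s₁) = Real.cos (Real.pi/2) := by
        rw [Real.cos_pi_div_two, hs₁]
        field_simp
        ring
      rw [h1, sdCheb_cos]
      have h2 : ((3:ℕ):ℝ) * (Real.pi/2) = Real.pi + Real.pi/2 := by push_cast; ring
      have h3 : Real.cos (Real.pi + Real.pi/2) = 0 := by
        rw [Real.cos_add]; simp
      rw [h2, h3, hs₁]; ring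
    have hM₂ : sdM 3 l s₂ = l^2/4 := by
      rw [sdM]
      have h1 : 1 - (l^2/2)/(1-s₂) = Real.cos Real.pi := by
        rw [Real.cos_pi, hs₂]
        field_simp
        ring
      rw [h1, sdCheb_cos]
      have h2 : ((3:ℕ):ℝ) * Real.pi = Real.pi + 2*Real.pi := by push_cast; ring
      have h3 : Real.cos (Real.pi + 2*Real.pi) = -1 := by
        rw [Real.cos_add, Real.cos_two_pi, Real.sin_two_pi, Real.cos_pi]; ring
      rw [h2, h3, hs₂]; ring
    have he₁ := hEq hs₁m
    have he₂ := hEq hs₂m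
    rw [sdH, hM₁] at he₁
    rw [sdH, hM₂] at he₂
    simp only [Pi.zero_apply] at he₁ he₂
    have hdiff : (s₁ - s₂) * (1 - l^2/4)^3 = 0 := by linarith
    have hs12 : s₁ - s₂ = -(l^2/4) := by rw [hs₁, hs₂]; ring
    have : (1 - l^2/4)^3 ≠ 0 := by
      apply pow_ne_zero
      intro h
      nlinarith
    rw [hs12] at hdiff
    have : -(l^2/4) = 0 := by
      rcases mul_eq_zero.mp hdiff with h | h
      · exact h
      · exact absurd h this
    nlinarith
  · -- n ≥ 4
    have hn4' : 4 ≤ n := hn4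
    have hpi1 : 0 < Real.pi / n := by positivity
    have hpi2 : Real.pi / n < 2 * Real.pi / n := by
      rw [div_lt_div_iff₀ hn0 hn0]
      nlinarith [Real.pi_pos]
    have hn4r : (4:ℝ) ≤ n := by exact_mod_cast hn4'
    have hpihalf : 2 * Real.pi / n ≤ Real.pi / 2 := by
      rw [div_le_div_iff₀ hn0 (by norm_num)]
      nlinarith [Real.pi_pos]
    have hsin1 : 0 < Real.sin (Real.pi / n) :=
      Real.sin_pos_of_pos_of_lt_pi hpi1 (by
        rw [div_lt_iff₀ hn0]; nlinarith [Real.pi_pos])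
    have hsin2 : 0 < Real.sin (2 * Real.pi / n) :=
      Real.sin_pos_of_pos_of_lt_pi (by positivity) (by
        rw [div_lt_iff₀ hn0]; nlinarith [Real.pi_pos])
    -- special points
    have key : ∀ ψ : ℝ, 0 < Real.sin ψ → Real.cos ((n:ℝ) * (2*ψ)) = 1 →
        sdN n lt 0 = 1 - l^2/(4 * Real.sin ψ^2) := by
      intro ψ hψ hcosn
      set sk : ℝ := 1 - l^2/(4 * Real.sin ψ^2) with hsk
      have hskm : sk ∈ Set.Iio (1:ℝ) := by
        simp only [Set.mem_Iio, hsk]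
        have : 0 < l^2/(4 * Real.sin ψ^2) := by positivity
        linarith
      have hMk : sdM n l sk = 0 := by
        rw [sdM]
        have h1 : 1 - (l^2/2)/(1-sk) = Real.cos (2*ψ) := by
          have hcos2 : Real.cos (2*ψ) = 1 - 2 * Real.sin ψ^2 := by
            have := Real.sin_sq_eq_half_sub ψ
            linarith
          rw [hcos2, hsk]
          have hψne : Real.sin ψ ^ 2 ≠ 0 := by positivity
          field_simp
          ring
        rw [h1, sdCheb_cos, hcosn]
        ring
      have := hEq hskm
      rw [sdH, hMk] at this
      simp only [Pi.zero_apply] at this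
      have h2 : sdN n lt 0 - sk = 0 := by simpa using this
      linarith
    have hnne : (n:ℝ) ≠ 0 := ne_of_gt hn0
    have hk1 := key (Real.pi / n) hsin1 (by
      have h : (n:ℝ) * (2 * (Real.pi / n)) = 2 * Real.pi := by
        field_simp
      rw [h, Real.cos_two_pi])
    have hk2 := key (2 * Real.pi / n) hsin2 (by
      have h : (n:ℝ) * (2 * (2 * Real.pi / n)) = ((2:ℕ):ℝ) * (2 * Real.pi) := by
        push_cast; field_simp
      rw [h]
      exact Real.cos_nat_mul_two_pi 2)
    -- so sin²(π/n) = sin²(2π/n), contradicting strict monotonicity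
    have hsineq : Real.sin (Real.pi/n)^2 = Real.sin (2*Real.pi/n)^2 := by
      have h1 : l^2/(4 * Real.sin (Real.pi/n)^2) = l^2/(4 * Real.sin (2*Real.pi/n)^2) := by
        linarith [hk1, hk2]
      have hpos1 : (0:ℝ) < 4 * Real.sin (Real.pi/n)^2 := by positivity
      have hpos2 : (0:ℝ) < 4 * Real.sin (2*Real.pi/n)^2 := by positivity
      have h2 := (div_eq_div_iff hpos1.ne' hpos2.ne').mp h1
      have hl2 : (l^2 : ℝ) ≠ 0 := ne_of_gt (by positivity)
      have h3 : (4 * Real.sin (2*Real.pi/n)^2) = (4 * Real.sin (Real.pi/n)^2) :=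
        mul_left_cancel₀ hl2 h2
      linarith
    have hmono : Real.sin (Real.pi/n) < Real.sin (2*Real.pi/n) := by
      apply Real.strictMonoOn_sin
      · constructor
        · linarith [Real.pi_pos, hpi1]
        · linarith [hpi2, hpihalf]
      · constructor
        · have : 0 < 2*Real.pi/n := by positivity
          linarith [Real.pi_pos]
        · exact hpihalf
      · exact hpi2
    nlinarith [hsin1, hsin2]
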